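/- If g, g' ∈ G_d have the same nonzero coefficient of 1 and the same 2-terms (i.e., the same coefficient of e_je_k for every 1 ≤ j < k ≤ d), then g = g'. -/

import Mathlib

noncomputable section

open CliffordAlgebra

/-- The negative definite quadratic form `v ↦ -‖v‖²` on `ℝ^n`. -/
def Qn (n : ℕ) : QuadraticForm ℝ (Fin n → ℝ) :=
  QuadraticMap.weightedSumSquares ℝ (fun _ : Fin n => (-1 : ℝ))

/-- The Clifford algebra `Cl_n = Cl(ℝ^n, -‖·‖²)`, with generators `e_1, …, e_n`
satisfying `e_j² = -1` and `e_je_k = -e_ke_j` for `j ≠ k`. -/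
abbrev Cl (n : ℕ) := CliffordAlgebra (Qn n)

/-- The generators `e_1, …, e_n` of `Cl_n` (0-indexed). -/
def gC (n : ℕ) (j : Fin n) : Cl n := CliffordAlgebra.ι (Qn n) (Pi.single j 1)

/-- The conjugate `x̄ = α(t(x))`, where `α` is the grade involution and `t` the reversal. -/
def conjC (n : ℕ) (x : Cl n) : Cl n := reverse (involute x)

/-- The linear embedding `i : ℝ^n → Cl_n`. -/
def iC (n : ℕ) (v : Fin n → ℝ) : Cl n := CliffordAlgebra.ι (Qn n) v

/-- Products of distinct generators of `Cl_n`, in increasing order of index. -/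
def sprodC (n : ℕ) (s : Finset (Fin n)) : Cl n := ((s.sort (· ≤ ·)).map (gC n)).prod

/-- The even part `Cl_n^0`: the span of `1` and the products of an even number of
distinct generators. -/
def ClE0 (n : ℕ) : Submodule ℝ (Cl n) :=
  Submodule.span ℝ {x | ∃ s : Finset (Fin n), Even s.card ∧ x = sprodC n s}

/-- The span of the `m`-terms of `Cl_n`: real multiples of products of `m` distinct
generators. -/
def mTermsC (n m : ℕ) : Submodule ℝ (Cl n) :=
  Submodule.span ℝ {x | ∃ s : Finset (Fin n), s.card = m ∧ x = sprodC n s}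

/-- `Spin(n)` inside `Cl_n`. -/
def SpinC (n : ℕ) : Set (Cl n) :=
  {x | x ∈ ClE0 n ∧ x * conjC n x = 1 ∧
    ∀ v : Fin n → ℝ, ∃ w : Fin n → ℝ, x * iC n v * conjC n x = iC n w}

/-- The coefficient of `1` of an element of `Cl_n` (computed via the normalized trace
of left-multiplication, which agrees with the coefficient of `1` w.r.t. the standard
monomial basis since `dim Cl_n = 2^n`). -/
def coeff1C (n : ℕ) (x : Cl n) : ℝ :=
  (2 ^ n : ℝ)⁻¹ * LinearMap.trace ℝ (Cl n) (LinearMap.mulLeft ℝ x)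

/-- `X_d`, realized as the dual numbers over `Cl_{d+1}`; the dual-number generator `ε`
is central with `ε² = 0` and plays the role of `e_{d+2}`. -/
abbrev Xa (d : ℕ) := DualNumber (Cl (d + 1))

namespace X

variable (d : ℕ)

/-- `e_1, …, e_{d+1}` (0-indexed) inside `X_d`. -/
def e (j : Fin (d + 1)) : Xa d := TrivSqZeroExt.inl (gC (d + 1) j)

/-- `e_{d+2}`. -/
def eps : Xa d := DualNumber.eps

/-- The generator `e_{d+1}`. -/
def eL : Xa d := e d (Fin.last d)

/-- The embedding of `ℝ^k` into `X_d` using the first `k` generators. -/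
def iK (k : ℕ) (v : Fin k → ℝ) : Xa d :=
  TrivSqZeroExt.inl (CliffordAlgebra.ι (Qn (d + 1))
    (fun j : Fin (d + 1) => if h : (j : ℕ) < k then v ⟨j, h⟩ else 0))

/-- `i : ℝ^d → X_d`. -/
def iMap (v : Fin d → ℝ) : Xa d := iK d d v

/-- The conjugate `x̄ = α(t(x))` on `X_d`. -/
def conj (x : Xa d) : Xa d :=
  TrivSqZeroExt.inl (conjC (d + 1) (TrivSqZeroExt.fst x)) +
    TrivSqZeroExt.inr (conjC (d + 1) (TrivSqZeroExt.snd x))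

/-- The norm `N(x) = x·x̄`. -/
def Nm (x : Xa d) : Xa d := x * conj d x

/-- The generating family of `Z_d^0`: `e_1, …, e_d` and `e_{d+1}e_{d+2}`. -/
def zgen (j : Fin (d + 1)) : Xa d := if (j : ℕ) < d then e d j else eL d * eps d

/-- Products of distinct elements of a family, in increasing order of index. -/
def sprod (f : Fin (d + 1) → Xa d) (s : Finset (Fin (d + 1))) : Xa d :=
  ((s.sort (· ≤ ·)).map f).prod

/-- `Z_d^0`: the span of `1` and the products of an even number of distinct elements
of `{e_1, …, e_d, e_{d+1}e_{d+2}}`. -/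
def Z0 : Submodule ℝ (Xa d) :=
  Submodule.span ℝ {x | ∃ s : Finset (Fin (d + 1)), Even s.card ∧ x = sprod d (zgen d) s}

/-- The span of the `m`-terms of `Z_d^0`. -/
def Zterms (m : ℕ) : Submodule ℝ (Xa d) :=
  Submodule.span ℝ {x | ∃ s : Finset (Fin (d + 1)), s.card = m ∧ x = sprod d (zgen d) s}

/-- The even Clifford algebra `Cl_k^0` (for `k ≤ d`), viewed inside `X_d`. -/
def ClE (k : ℕ) : Submodule ℝ (Xa d) :=
  Submodule.span ℝ {x | ∃ s : Finset (Fin (d + 1)),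
    (∀ j ∈ s, (j : ℕ) < k) ∧ Even s.card ∧ x = sprod d (e d) s}

/-- `Spun(d)`. -/
def Spun : Set (Xa d) :=
  {z | z ∈ Z0 d ∧ Nm d z = 1 ∧
    ∀ v : Fin d → ℝ, ∃ w : Fin d → ℝ,
      z * (eps d * iMap d v + eL d) * conj d z = eps d * iMap d w + eL d}

/-- `Spin(k)` (for `k ≤ d`), viewed inside `X_d`. -/
def Spin (k : ℕ) : Set (Xa d) :=
  {x | x ∈ ClE d k ∧ Nm d x = 1 ∧
    ∀ v : Fin k → ℝ, ∃ w : Fin k → ℝ, x * iK d k v * conj d x = iK d k w}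

/-- `T_{ap}`: the elements of `Spun(d)` whose action takes `a` to `p`. -/
def T (a p : Fin d → ℝ) : Set (Xa d) :=
  {x | x ∈ Spun d ∧ x * (eps d * iMap d a + eL d) * conj d x = eps d * iMap d p + eL d}

/-- `F_{ap} = (1 + ½e_{d+1}e_{d+2}i(p))·Cl_d^0·(1 − ½e_{d+1}e_{d+2}i(a))`. -/
def F (a p : Fin d → ℝ) : Set (Xa d) :=
  (fun y => (1 + (2 : ℝ)⁻¹ • (eL d * eps d * iMap d p)) * y *
      (1 - (2 : ℝ)⁻¹ • (eL d * eps d * iMap d a))) '' (ClE d d : Set (Xa d))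

/-- The coefficient of `1` of an element of `X_d`. -/
def c1 (x : Xa d) : ℝ := coeff1C (d + 1) (TrivSqZeroExt.fst x)

/-- The index set for the 2-term coordinates of `Z_d^0`; it has `d(d+1)/2` elements.
A pair `(j,k)` with `k < last` indexes the 2-term `e_{j+1}e_{k+1}`, while a pair
`(j, last)` indexes the 2-term `e_{j+1}e_{d+1}e_{d+2}`. -/
abbrev Idx := {p : Fin (d + 1) × Fin (d + 1) // p.1 < p.2}

/-- The coefficient of the 2-term indexed by `p`. -/
def c2 (p : Idx d) (x : Xa d) : ℝ :=
  if (p.1.2 : ℕ) < d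
  then coeff1C (d + 1) (gC (d + 1) p.1.2 * gC (d + 1) p.1.1 * TrivSqZeroExt.fst x)
  else coeff1C (d + 1) (gC (d + 1) p.1.2 * gC (d + 1) p.1.1 * TrivSqZeroExt.snd x)

/-- The hyperplane `H_0 = {x₁ = 0}` (coefficient of `1` vanishes). -/
def H0 : Set (Xa d) := {x | c1 d x = 0}

/-- The map `η_d = π' ∘ π`: scale so that the coefficient of `1` is `1`, then keep only
the 2-term coordinates. -/
def eta (x : Xa d) : Idx d → ℝ := fun p => (c1 d x)⁻¹ * c2 d p x

/-- `Spun(d)_+`: elements of `Spun(d)` with positive coefficient of `1`. -/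
def SpunP : Set (Xa d) := {x | x ∈ Spun d ∧ 0 < c1 d x}

/-- `L_{ap} = η_d(T_{ap} \ H_0)`. -/
def L (a p : Fin d → ℝ) : Set (Idx d → ℝ) := eta d '' (T d a p \ H0 d)

end X

namespace StmtAux
variable {n : ℕ}

lemma Qn_apply (v : Fin n → ℝ) : Qn n v = - ∑ i, v i * v i := by
  simp [Qn, QuadraticMap.weightedSumSquares_apply, Finset.sum_neg_distrib]

lemma Qn_single (j : Fin n) : Qn n (Pi.single j 1) = -1 := by
  rw [Qn_apply, Finset.sum_eq_single j] <;> simp +contextual [Pi.single_apply]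

lemma polar_single (j : Fin n) (v : Fin n → ℝ) :
    QuadraticMap.polar (Qn n) (Pi.single j 1) v = -(2 * v j) := by
  rw [QuadraticMap.polar]
  simp only [Qn_apply, Pi.add_apply]
  rw [show ∀ a b c : ℝ, -a - -b - -c = -(a - b - c) by intros; ring, neg_inj,
    ← Finset.sum_sub_distrib, ← Finset.sum_sub_distrib, Finset.sum_eq_single j]
  · simp; ring
  · intro i _ hij
    simp [Pi.single_apply, hij]
  · simp

lemma gC_sq (j : Fin n) : gC n j * gC n j = -1 := by
  rw [gC, CliffordAlgebra.ι_sq_scalar, Qn_single, map_neg, map_one]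

lemma gC_anticomm {j k : Fin n} (h : j ≠ k) : gC n j * gC n k = - (gC n k * gC n j) := by
  have h2 := CliffordAlgebra.ι_mul_ι_add_swap (Q := Qn n) (Pi.single j 1) (Pi.single k 1)
  have hp : QuadraticMap.polar (Qn n) (Pi.single j 1) (Pi.single k 1) = 0 := by
    rw [polar_single, Pi.single_apply, if_neg h]; ring
  rw [hp, map_zero] at h2
  rw [eq_neg_iff_add_eq_zero]
  exact h2

lemma iC_eq_sum (v : Fin n → ℝ) : iC n v = ∑ j, v j • gC n j := by
  rw [iC]
  have : v = ∑ j, Pi.single j (v j) := (Finset.univ_sum_single v).symm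
  rw [show ((ι (Qn n)) v : Cl n) = ι (Qn n) (∑ j, Pi.single j (v j)) by rw [← this], map_sum]
  refine Finset.sum_congr rfl fun j _ => ?_
  rw [gC, ← map_smul]
  congr 1
  ext i; simp [Pi.single_apply]

/-- coefficient functional basic properties -/
lemma coeff1C_add (x y : Cl n) : coeff1C n (x + y) = coeff1C n x + coeff1C n y := by
  have : LinearMap.mulLeft ℝ (x + y) = LinearMap.mulLeft ℝ x + LinearMap.mulLeft ℝ y := by
    ext z; simp [add_mul]
  rw [coeff1C, this, map_add]; rw [coeff1C, coeff1C]; ring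

lemma coeff1C_smul (c : ℝ) (x : Cl n) : coeff1C n (c • x) = c * coeff1C n x := by
  have : LinearMap.mulLeft ℝ (c • x) = c • LinearMap.mulLeft ℝ x := by
    ext z; simp [smul_mul_assoc]
  rw [coeff1C, this, map_smul]; rw [coeff1C]; simp; ring

lemma coeff1C_sub (x y : Cl n) : coeff1C n (x - y) = coeff1C n x - coeff1C n y := by
  have h := coeff1C_add (x - y) y
  rw [sub_add_cancel] at h
  linarith

lemma coeff1C_mul_comm (x y : Cl n) : coeff1C n (x * y) = coeff1C n (y * x) := by
  rw [coeff1C, coeff1C, LinearMap.mulLeft_mul, LinearMap.mulLeft_mul,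
    ← Module.End.mul_eq_comp, ← Module.End.mul_eq_comp, LinearMap.trace_mul_comm]

lemma coeff1C_algebraMap_mul (c : ℝ) (x : Cl n) :
    coeff1C n (algebraMap ℝ (Cl n) c * x) = c * coeff1C n x := by
  rw [← Algebra.smul_def, coeff1C_smul]

/-- the sign flip on the `j`-th coordinate -/
def fJ (n : ℕ) (j : Fin n) : (Fin n → ℝ) →ₗ[ℝ] (Fin n → ℝ) where
  toFun v := fun i => if i = j then -v i else v i
  map_add' v w := by ext i; by_cases h : i = j <;> simp [h] <;> ring
  map_smul' c v := by ext i; by_cases h : i = j <;> simp [h]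

lemma Qn_fJ (j : Fin n) (v : Fin n → ℝ) : Qn n (fJ n j v) = Qn n v := by
  rw [Qn_apply, Qn_apply, neg_inj]
  refine Finset.sum_congr rfl fun i _ => ?_
  by_cases h : i = j <;> simp [fJ, h]

lemma fJ_fJ (j : Fin n) (v : Fin n → ℝ) : fJ n j (fJ n j v) = v := by
  ext i; by_cases h : i = j <;> simp [fJ, h]

/-- the algebra automorphism flipping the sign of `e_j` -/
def sig (n : ℕ) (j : Fin n) : Cl n →ₐ[ℝ] Cl n :=
  CliffordAlgebra.lift (Qn n) ⟨(CliffordAlgebra.ι (Qn n)).comp (fJ n j),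
    fun v => by rw [LinearMap.comp_apply, CliffordAlgebra.ι_sq_scalar, Qn_fJ]⟩

lemma sig_ι (j : Fin n) (v : Fin n → ℝ) :
    sig n j (CliffordAlgebra.ι (Qn n) v) = CliffordAlgebra.ι (Qn n) (fJ n j v) := by
  rw [sig, CliffordAlgebra.lift_ι_apply, LinearMap.comp_apply]

lemma fJ_single_self (j : Fin n) : fJ n j (Pi.single j (1:ℝ)) = -Pi.single j 1 := by
  ext i; by_cases h : i = j <;> simp [fJ, h]

lemma fJ_single_ne {j k : Fin n} (h : k ≠ j) : fJ n j (Pi.single k (1:ℝ)) = Pi.single k 1 := by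
  ext i; by_cases hi : i = j <;> simp [fJ, hi, Pi.single_apply, Ne.symm h]

lemma sig_gC_self (j : Fin n) : sig n j (gC n j) = -gC n j := by
  rw [gC, sig_ι, fJ_single_self, map_neg]

lemma sig_gC_ne {j k : Fin n} (h : k ≠ j) : sig n j (gC n k) = gC n k := by
  rw [gC, sig_ι, fJ_single_ne h]

lemma sig_sig (j : Fin n) (x : Cl n) : sig n j (sig n j x) = x := by
  induction x using CliffordAlgebra.induction with
  | algebraMap r => simp
  | ι v => rw [sig_ι, sig_ι, fJ_fJ]
  | mul a b ha hb => rw [map_mul, map_mul, ha, hb]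
  | add a b ha hb => rw [map_add, map_add, ha, hb]

lemma sig_involute (j : Fin n) (x : Cl n) :
    sig n j (involute x) = involute (sig n j x) := by
  induction x using CliffordAlgebra.induction with
  | algebraMap r => simp
  | ι v => rw [involute_ι, map_neg, sig_ι, involute_ι]
  | mul a b ha hb => rw [map_mul, map_mul, map_mul, map_mul, ha, hb]
  | add a b ha hb => rw [map_add, map_add, map_add, map_add, ha, hb]

/-- key identity: `e_j · α(x) = σ_j(x) · e_j` -/
lemma ej_mul_involute (j : Fin n) (x : Cl n) :
    gC n j * involute x = sig n j x * gC n j := by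
  induction x using CliffordAlgebra.induction with
  | algebraMap r =>
      rw [show (involute (algebraMap ℝ (Cl n) r) : Cl n) = algebraMap ℝ (Cl n) r by simp,
        show (sig n j (algebraMap ℝ (Cl n) r) : Cl n) = algebraMap ℝ (Cl n) r by simp]
      rw [← Algebra.commutes]
  | ι v =>
      rw [involute_ι, sig_ι]
      have hfj : fJ n j v = v - (2 * v j) • (Pi.single j 1 : Fin n → ℝ) := by
        ext i; by_cases h : i = j <;> simp [fJ, h, Pi.single_apply] <;> ring
      have hpol := CliffordAlgebra.ι_mul_ι_add_swap (Q := Qn n) (Pi.single j 1) v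
      rw [polar_single] at hpol
      have hpol' : gC n j * (ι (Qn n)) v + (ι (Qn n)) v * gC n j
          = (-(2 * v j)) • (1 : Cl n) := by
        rw [← Algebra.algebraMap_eq_smul_one]; exact hpol
      rw [hfj, map_sub, map_smul, sub_mul, smul_mul_assoc,
        show ((ι (Qn n)) (Pi.single j 1) : Cl n) = gC n j from rfl, gC_sq, mul_neg, smul_neg,
        sub_neg_eq_add,
        show ((2*v j) • (1:Cl n)) = -((-(2*v j)) • (1:Cl n)) by rw [neg_smul, neg_neg],
        ← hpol']
      abel
  | mul a b ha hb =>
      rw [map_mul, map_mul, ← mul_assoc, ha, mul_assoc, hb, ← mul_assoc]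
  | add a b ha hb =>
      rw [map_add, map_add, mul_add, add_mul, ha, hb]

/-- `ρ_j y := σ_j (α y)` satisfies `e_j y = ρ_j y · e_j` and `y e_j = e_j · ρ_j y`. -/
def rhoHom (n : ℕ) (j : Fin n) : Cl n →ₐ[ℝ] Cl n :=
  (sig n j).comp (CliffordAlgebra.involute)

lemma rho_rho (j : Fin n) (y : Cl n) : rhoHom n j (rhoHom n j y) = y := by
  simp only [rhoHom, AlgHom.comp_apply]
  rw [← sig_involute, involute_involute, sig_sig]

lemma ej_mul (j : Fin n) (y : Cl n) : gC n j * y = rhoHom n j y * gC n j := by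
  have := ej_mul_involute j (involute y)
  rwa [involute_involute] at this

lemma mul_ej (j : Fin n) (y : Cl n) : y * gC n j = gC n j * rhoHom n j y := by
  rw [ej_mul j (rhoHom n j y), rho_rho]

/-- subalgebra generated by the generators indexed by `s` -/
def Bs (n : ℕ) (s : Finset (Fin n)) : Subalgebra ℝ (Cl n) :=
  Algebra.adjoin ℝ (gC n '' ↑s)

lemma mem_Bs_univ (x : Cl n) : x ∈ Bs n Finset.univ := by
  induction x using CliffordAlgebra.induction with
  | algebraMap r => exact (Bs n Finset.univ).algebraMap_mem r
  | ι v =>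
      have : (ι (Qn n)) v = ∑ j, v j • gC n j := by
        have hv : v = ∑ j, Pi.single j (v j) := (Finset.univ_sum_single v).symm
        rw [show ((ι (Qn n)) v : Cl n) = ι (Qn n) (∑ j, Pi.single j (v j)) by rw [← hv], map_sum]
        refine Finset.sum_congr rfl fun j _ => ?_
        rw [gC, ← map_smul]
        congr 1
        ext i; simp [Pi.single_apply]
      rw [this]
      refine Subalgebra.sum_mem _ fun j _ => Subalgebra.smul_mem _ ?_ _
      exact Algebra.subset_adjoin (Set.mem_image_of_mem _ (by simp))
  | mul a b ha hb => exact mul_mem ha hb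
  | add a b ha hb => exact add_mem ha hb

lemma rho_mem_Bs {s : Finset (Fin n)} (j : Fin n) {x : Cl n} (hx : x ∈ Bs n s) :
    rhoHom n j x ∈ Bs n s := by
  have h : Bs n s ≤ (Bs n s).comap (rhoHom n j) := by
    rw [Bs]
    apply Algebra.adjoin_le
    rintro - ⟨k, hk, rfl⟩
    rw [SetLike.mem_coe, Subalgebra.mem_comap]
    have : rhoHom n j (gC n k) = - sig n j (gC n k) := by
      rw [rhoHom, AlgHom.comp_apply, show (involute (gC n k) : Cl n) = -gC n k by
        rw [gC, involute_ι], map_neg]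
    rw [this]
    rcases eq_or_ne k j with rfl | hkj
    · rw [sig_gC_self, neg_neg]
      exact Algebra.subset_adjoin ⟨k, hk, rfl⟩
    · rw [sig_gC_ne hkj]
      exact neg_mem (Algebra.subset_adjoin ⟨k, hk, rfl⟩)
  exact h hx

lemma sig_fixes_Bs {s : Finset (Fin n)} {j : Fin n} (hj : j ∉ s) {x : Cl n}
    (hx : x ∈ Bs n s) : sig n j x = x := by
  have h : Bs n s ≤ AlgHom.equalizer (sig n j) (AlgHom.id ℝ (Cl n)) := by
    apply Algebra.adjoin_le
    rintro - ⟨k, hk, rfl⟩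
    have : k ≠ j := fun h => hj (h ▸ hk)
    exact sig_gC_ne this
  exact h hx

/-- the decomposition subalgebra `B' + e_j B'` -/
def Vsub (n : ℕ) (s : Finset (Fin n)) (j : Fin n) : Subalgebra ℝ (Cl n) where
  carrier := {x | ∃ a ∈ Bs n (s.erase j), ∃ b ∈ Bs n (s.erase j), x = a + gC n j * b}
  mul_mem' := by
    rintro x y ⟨a, ha, b, hb, rfl⟩ ⟨c, hc, d, hd, rfl⟩
    refine ⟨a * c - rhoHom n j b * d, ?_, rhoHom n j a * d + b * c, ?_, ?_⟩
    · exact sub_mem (mul_mem ha hc) (mul_mem (rho_mem_Bs j hb) hd)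
    · exact add_mem (mul_mem (rho_mem_Bs j ha) hd) (mul_mem hb hc)
    · have h1 : a * (gC n j * d) = gC n j * (rhoHom n j a * d) := by
        rw [← mul_assoc, mul_ej j a, mul_assoc]
      have h2 : (gC n j * b) * (gC n j * d) = - (rhoHom n j b * d) := by
        rw [mul_assoc, ← mul_assoc b, mul_ej j b, ← mul_assoc, ← mul_assoc, gC_sq]
        noncomm_ring
      rw [add_mul, mul_add, mul_add, h1, h2,
        mul_add (gC n j) ((rhoHom n j) a * d) (b * c), mul_assoc (gC n j) b c, sub_eq_add_neg]
      abel
  one_mem' := ⟨1, one_mem _, 0, zero_mem _, by rw [mul_zero, add_zero]⟩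
  add_mem' := by
    rintro x y ⟨a, ha, b, hb, rfl⟩ ⟨c, hc, d, hd, rfl⟩
    exact ⟨a + c, add_mem ha hc, b + d, add_mem hb hd, by rw [mul_add]; abel⟩
  algebraMap_mem' r := ⟨algebraMap ℝ _ r, (Bs n _).algebraMap_mem r, 0, zero_mem _,
    by rw [mul_zero, add_zero]⟩

lemma descend {s : Finset (Fin n)} {j : Fin n} (hj : j ∈ s) {x : Cl n}
    (hx : x ∈ Bs n s) (hfix : sig n j x = x) : x ∈ Bs n (s.erase j) := by
  have hBV : Bs n s ≤ Vsub n s j := by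
    apply Algebra.adjoin_le
    rintro - ⟨k, hk, rfl⟩
    rcases eq_or_ne k j with rfl | hkj
    · exact ⟨0, zero_mem _, 1, one_mem _, by rw [mul_one, zero_add]⟩
    · exact ⟨gC n k, Algebra.subset_adjoin ⟨k, by simp [Finset.mem_erase, hkj, hk], rfl⟩,
        0, zero_mem _, by rw [mul_zero, add_zero]⟩
  obtain ⟨a, ha, b, hb, rfl⟩ := hBV hx
  have hja : j ∉ s.erase j := Finset.notMem_erase j s
  have hsig : sig n j (a + gC n j * b) = a - gC n j * b := by
    rw [map_add, map_mul, sig_gC_self, sig_fixes_Bs hja ha, sig_fixes_Bs hja hb,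
      neg_mul, ← sub_eq_add_neg]
  rw [hsig] at hfix
  have hb0 : gC n j * b = 0 := by
    have h2 : gC n j * b + gC n j * b = 0 := by
      have h3 : (a - gC n j * b) - (a + gC n j * b) = -(gC n j * b + gC n j * b) := by abel
      rw [hfix] at h3
      rw [← neg_eq_zero, ← h3, sub_self]
    have h4 : (2 : ℝ) • (gC n j * b) = 0 := by rw [two_smul]; exact h2
    rcases smul_eq_zero.mp h4 with h | h
    · norm_num at h
    · exact h
  have hbb : b = 0 := by
    have := congrArg (fun z => gC n j * z) hb0
    simpa [← mul_assoc, gC_sq] using this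
  rw [hbb, mul_zero, add_zero]
  exact ha

lemma central_even_scalar {x : Cl n} (hc : ∀ v : Fin n → ℝ, x * (ι (Qn n)) v = (ι (Qn n)) v * x)
    (he : involute x = x) : ∃ c : ℝ, x = algebraMap ℝ (Cl n) c := by
  have hsig : ∀ j : Fin n, sig n j x = x := by
    intro j
    have h1 : gC n j * x = sig n j x * gC n j := by
      have := ej_mul_involute j x
      rwa [he] at this
    have h2 : gC n j * x = x * gC n j := (hc (Pi.single j 1)).symm
    have h3 : (sig n j x - x) * gC n j = 0 := by rw [sub_mul, ← h1, h2, sub_self]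
    have h4 := congrArg (fun z => z * gC n j) h3
    simp only [zero_mul, mul_assoc, gC_sq, mul_neg_one, neg_sub] at h4
    exact (sub_eq_zero.mp h4).symm
  have key : ∀ s : Finset (Fin n), ∀ y : Cl n, (∀ j, sig n j y = y) → y ∈ Bs n s →
      y ∈ Bs n (∅ : Finset (Fin n)) := by
    intro s
    induction s using Finset.induction_on with
    | empty => intro y _ hy; exact hy
    | insert j s hjs ih =>
        intro y hy hmem
        have := descend (Finset.mem_insert_self j s) hmem (hy j)
        rw [Finset.erase_insert hjs] at this
        exact ih y hy this
  have := key Finset.univ x hsig (mem_Bs_univ x)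
  rw [Bs] at this
  simp only [Finset.coe_empty, Set.image_empty, Algebra.adjoin_empty, Algebra.mem_bot] at this
  obtain ⟨c, hcx⟩ := this
  exact ⟨c, hcx.symm⟩

def lP (n : ℕ) (l : List (Fin n)) : Cl n := (l.map (gC n)).prod

lemma lP_nil : lP n ([] : List (Fin n)) = 1 := rfl
lemma lP_cons (a : Fin n) (l : List (Fin n)) : lP n (a :: l) = gC n a * lP n l := by
  simp [lP]

lemma iC_sum (v : Fin n → ℝ) : (CliffordAlgebra.ι (Qn n)) v = ∑ j, v j • gC n j :=
  iC_eq_sum v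

lemma coeff1C_neg (x : Cl n) : coeff1C n (-x) = - coeff1C n x := by
  have := coeff1C_smul (-1 : ℝ) x
  simpa using this


def coeff1L (n : ℕ) : Cl n →ₗ[ℝ] ℝ where
  toFun := coeff1C n
  map_add' := coeff1C_add
  map_smul' c x := by simp [coeff1C_smul]

lemma coeff1C_sum {ι : Type*} (s : Finset ι) (f : ι → Cl n) :
    coeff1C n (∑ i ∈ s, f i) = ∑ i ∈ s, coeff1C n (f i) :=
  map_sum (coeff1L n) f s

/-- involute fixes products of evenly many generators -/
lemma involute_lP (l : List (Fin n)) :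
    involute (lP n l) = ((-1 : ℝ) ^ l.length) • lP n l := by
  induction l with
  | nil => simp [lP_nil]
  | cons a t ih =>
      rw [lP_cons, map_mul, ih, show (involute (gC n a) : Cl n) = -gC n a by
        rw [gC, involute_ι], List.length_cons, pow_succ, neg_mul, mul_neg, mul_one,
        neg_smul, mul_smul_comm]

lemma involute_of_mem_ClE0 {x : Cl n} (hx : x ∈ ClE0 n) : involute x = x := by
  induction hx using Submodule.span_induction with
  | mem y hy =>
      obtain ⟨s, hs, rfl⟩ := hy
      rw [show sprodC n s = lP n (Finset.sort s (· ≤ ·)) from rfl, involute_lP,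
        Finset.length_sort, Even.neg_one_pow hs, one_smul]
  | zero => exact map_zero _
  | add a b _ _ ha hb => rw [map_add, ha, hb]
  | smul c a _ ha => rw [map_smul, ha]

lemma normal (l : List (Fin n)) (hl : l.Pairwise (· < ·)) (j : Fin n) :
    ∃ c : ℝ, ∃ l' : List (Fin n), l'.Pairwise (· < ·) ∧ (∀ x ∈ l', x = j ∨ x ∈ l) ∧
      gC n j * lP n l = c • lP n l' := by
  induction l with
  | nil =>
      exact ⟨1, [j], List.pairwise_singleton _ j, by simp, by
        rw [lP_cons, lP_nil, mul_one, one_smul]⟩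
  | cons h t ih =>
      have hht := List.pairwise_cons.mp hl
      rcases lt_trichotomy j h with hjh | rfl | hhj
      · refine ⟨1, j :: h :: t, ?_, by simp +contextual [or_comm], by simp [lP_cons]⟩
        exact List.pairwise_cons.mpr ⟨fun x hx => by
          rcases List.mem_cons.mp hx with rfl | hx
          · exact hjh
          · exact hjh.trans (hht.1 x hx), hl⟩
      · refine ⟨-1, t, hht.2, fun x hx => Or.inr (List.mem_cons_of_mem _ hx), ?_⟩
        rw [lP_cons, ← mul_assoc, gC_sq, neg_one_mul, neg_smul, one_smul]
      · obtain ⟨c, l'', hs, hmem, heq⟩ := ih hht.2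
        refine ⟨-c, h :: l'', ?_, ?_, ?_⟩
        · refine List.pairwise_cons.mpr ⟨fun x hx => ?_, hs⟩
          rcases hmem x hx with rfl | hx'
          · exact hhj
          · exact hht.1 x hx'
        · intro x hx
          rcases List.mem_cons.mp hx with rfl | hx'
          · exact Or.inr List.mem_cons_self
          · rcases hmem x hx' with rfl | h2
            · exact Or.inl rfl
            · exact Or.inr (List.mem_cons_of_mem _ h2)
        · rw [lP_cons, ← mul_assoc, gC_anticomm (ne_of_gt hhj), neg_mul, mul_assoc, heq,
            lP_cons, neg_smul, neg_inj, mul_smul_comm]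

lemma lP_mem_range {l : List (Fin n)} (hl : l.Pairwise (· < ·)) :
    lP n l ∈ Set.range (sprodC n) := by
  refine ⟨l.toFinset, ?_⟩
  have hnd : l.Nodup := hl.nodup
  have hle : l.Pairwise (· ≤ ·) := hl.imp le_of_lt
  have : Finset.sort l.toFinset (· ≤ ·) = l := (List.toFinset_sort (· ≤ ·) hnd).mpr hle
  rw [sprodC, this]; rfl

lemma span_sprodC_top : Submodule.span ℝ (Set.range (sprodC n)) = ⊤ := by
  set W := Submodule.span ℝ (Set.range (sprodC n)) with hW
  have h1 : ∀ (j : Fin n) (w : Cl n), w ∈ W → gC n j * w ∈ W := by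
    intro j w hw
    induction hw using Submodule.span_induction with
    | mem x hx =>
        obtain ⟨s, rfl⟩ := hx
        have hsort : (Finset.sort s (· ≤ ·)).Pairwise (· < ·) := List.sortedLT_iff_pairwise.mp (Finset.sortedLT_sort s)
        obtain ⟨c, l', hs', _, heq⟩ := normal _ hsort j
        rw [show sprodC n s = lP n (Finset.sort s (· ≤ ·)) from rfl, heq]
        exact Submodule.smul_mem _ _ (Submodule.subset_span (lP_mem_range hs'))
    | zero => rw [mul_zero]; exact zero_mem _
    | add x y _ _ hx hy => rw [mul_add]; exact add_mem hx hy
    | smul c x _ hx => rw [mul_smul_comm]; exact Submodule.smul_mem _ _ hx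
  have h3 : ∀ x : Cl n, ∀ w ∈ W, x * w ∈ W := by
    intro x
    induction x using CliffordAlgebra.induction with
    | algebraMap r => intro w hw; rw [← Algebra.smul_def]; exact Submodule.smul_mem _ _ hw
    | ι v =>
        intro w hw
        rw [iC_sum, Finset.sum_mul]
        exact Submodule.sum_mem _ fun j _ => by
          rw [smul_mul_assoc]; exact Submodule.smul_mem _ _ (h1 j w hw)
    | mul a b ha hb => intro w hw; rw [mul_assoc]; exact ha _ (hb w hw)
    | add a b ha hb => intro w hw; rw [add_mul]; exact add_mem (ha w hw) (hb w hw)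
  have hone : (1 : Cl n) ∈ W := by
    refine Submodule.subset_span ⟨∅, ?_⟩
    rw [sprodC, Finset.sort_empty]
    rfl
  refine eq_top_iff.mpr fun x _ => ?_
  simpa using h3 x 1 hone

lemma finiteCl : Module.Finite ℝ (Cl n) := by
  refine ⟨Submodule.fg_def.mpr ⟨Set.range (sprodC n), ?_, span_sprodC_top⟩⟩
  exact Set.finite_range _

lemma mul_one_comm {a b : Cl n} (h : a * b = 1) : b * a = 1 := by
  haveI : Module.Finite ℝ (Cl n) := finiteCl
  have hsurj : Function.Surjective (LinearMap.mulLeft ℝ a) := fun y =>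
    ⟨b * y, by rw [LinearMap.mulLeft_apply, ← mul_assoc, h, one_mul]⟩
  have hinj := LinearMap.injective_iff_surjective.mpr hsurj
  have : (LinearMap.mulLeft ℝ a) (b * a) = (LinearMap.mulLeft ℝ a) 1 := by
    rw [LinearMap.mulLeft_apply, LinearMap.mulLeft_apply, ← mul_assoc, h, one_mul, mul_one]
  exact hinj this

end StmtAux

/-- If `g, g' ∈ G_d = {r·γ : r ∈ ℝ \ {0}, γ ∈ Spin(d)}` have the same
nonzero coefficient of `1` and the same coefficient of `e_je_k` for every
`1 ≤ j < k ≤ d`, then `g = g'`. -/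
theorem G_determined_by_low_coefficients (d : ℕ) (g g' : Cl d)
    (hg : ∃ r : ℝ, r ≠ 0 ∧ ∃ γ ∈ SpinC d, g = r • γ)
    (hg' : ∃ r : ℝ, r ≠ 0 ∧ ∃ γ ∈ SpinC d, g' = r • γ)
    (h1 : coeff1C d g = coeff1C d g') (h1ne : coeff1C d g ≠ 0)
    (h2 : ∀ j k : Fin d, j < k →
      coeff1C d (gC d k * gC d j * g) = coeff1C d (gC d k * gC d j * g')) :
    g = g' := by
  classical
  open StmtAux in
  obtain ⟨r, hr, γ, ⟨hγE, hγN, hγact⟩, rfl⟩ := hg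
  obtain ⟨r', hr', γ', ⟨hγE', hγN', hγact'⟩, rfl⟩ := hg'
  set g := r • γ with hgdef
  set g' := r' • γ' with hgdef'
  -- two-sided inverses
  have hγN2 : conjC d γ * γ = 1 := mul_one_comm hγN
  have hγN2' : conjC d γ' * γ' = 1 := mul_one_comm hγN'
  -- the coefficient functional, on all pairs of generators
  have hpair : ∀ m j : Fin d, coeff1C d (gC d m * gC d j * g) = coeff1C d (gC d m * gC d j * g') := by
    intro m j
    rcases lt_trichotomy m j with hmj | rfl | hjm
    · have hne : m ≠ j := ne_of_lt hmj
      rw [gC_anticomm hne]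
      simp only [neg_mul, coeff1C_neg]
      rw [h2 m j hmj]
    · rw [gC_sq]
      simp only [neg_one_mul, coeff1C_neg]
      rw [h1]
    · exact h2 j m hjm
  -- bilinear version
  have hbil : ∀ a b : Fin d → ℝ,
      coeff1C d (iC d a * iC d b * g) = coeff1C d (iC d a * iC d b * g') := by
    intro a b
    have expand : ∀ x : Cl d, iC d a * iC d b * x
        = ∑ m, ∑ j, (a m * b j) • (gC d m * gC d j * x) := by
      intro x
      rw [show iC d a = ∑ m, a m • gC d m from iC_sum a,
        show iC d b = ∑ j, b j • gC d j from iC_sum b, Finset.sum_mul_sum, Finset.sum_mul]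
      refine Finset.sum_congr rfl fun m _ => ?_
      rw [Finset.sum_mul]
      refine Finset.sum_congr rfl fun j _ => ?_
      rw [smul_mul_assoc, mul_smul_comm, smul_mul_assoc, smul_mul_assoc, smul_smul, mul_assoc]
    have hsum : ∀ x : Cl d, coeff1C d (∑ m, ∑ j, (a m * b j) • (gC d m * gC d j * x))
        = ∑ m, ∑ j, (a m * b j) * coeff1C d (gC d m * gC d j * x) := by
      intro x
      rw [coeff1C_sum]
      exact Finset.sum_congr rfl fun m _ => by
        rw [coeff1C_sum]
        exact Finset.sum_congr rfl fun j _ => coeff1C_smul _ _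
    rw [expand g, expand g', hsum g, hsum g']
    exact Finset.sum_congr rfl fun m _ => Finset.sum_congr rfl fun j _ => by rw [hpair]
  -- the rotation vectors agree
  have huniq : ∀ v : Fin d → ℝ, ∀ u u' : Fin d → ℝ,
      γ * iC d v * conjC d γ = iC d u → γ' * iC d v * conjC d γ' = iC d u' → u = u' := by
    intro v u u' hu hu'
    have hγrel : γ * iC d v = iC d u * γ := by
      calc γ * iC d v = γ * iC d v * (conjC d γ * γ) := by rw [hγN2, mul_one]
        _ = (γ * iC d v * conjC d γ) * γ := by rw [← mul_assoc]
        _ = iC d u * γ := by rw [hu]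
    have hγrel' : γ' * iC d v = iC d u' * γ' := by
      calc γ' * iC d v = γ' * iC d v * (conjC d γ' * γ') := by rw [hγN2', mul_one]
        _ = (γ' * iC d v * conjC d γ') * γ' := by rw [← mul_assoc]
        _ = iC d u' * γ' := by rw [hu']
    have hgrel : g * iC d v = iC d u * g := by
      rw [hgdef, smul_mul_assoc, hγrel, mul_smul_comm]
    have hgrel' : g' * iC d v = iC d u' * g' := by
      rw [hgdef', smul_mul_assoc, hγrel', mul_smul_comm]
    -- test against iC z
    have htest : ∀ z : Fin d → ℝ,
        coeff1C d (iC d v * iC d z * g) = coeff1C d (iC d z * iC d u * g) := by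
      intro z
      have e1 : iC d z * (g * iC d v) = iC d z * (iC d u * g) := by rw [hgrel]
      have e2 : coeff1C d ((iC d z * g) * iC d v) = coeff1C d (iC d v * (iC d z * g)) :=
        coeff1C_mul_comm _ _
      calc coeff1C d (iC d v * iC d z * g) = coeff1C d (iC d v * (iC d z * g)) := by
            rw [mul_assoc]
        _ = coeff1C d ((iC d z * g) * iC d v) := e2.symm
        _ = coeff1C d (iC d z * (g * iC d v)) := by rw [mul_assoc]
        _ = coeff1C d (iC d z * (iC d u * g)) := by rw [e1]
        _ = coeff1C d (iC d z * iC d u * g) := by rw [mul_assoc]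
    have htest' : ∀ z : Fin d → ℝ,
        coeff1C d (iC d v * iC d z * g') = coeff1C d (iC d z * iC d u' * g') := by
      intro z
      have e1 : iC d z * (g' * iC d v) = iC d z * (iC d u' * g') := by rw [hgrel']
      calc coeff1C d (iC d v * iC d z * g') = coeff1C d (iC d v * (iC d z * g')) := by
            rw [mul_assoc]
        _ = coeff1C d ((iC d z * g') * iC d v) := (coeff1C_mul_comm _ _).symm
        _ = coeff1C d (iC d z * (g' * iC d v)) := by rw [mul_assoc]
        _ = coeff1C d (iC d z * (iC d u' * g')) := by rw [e1]
        _ = coeff1C d (iC d z * iC d u' * g') := by rw [mul_assoc]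
    set w : Fin d → ℝ := u - u' with hw
    have hkey : coeff1C d (iC d w * iC d w * g) = 0 := by
      have c1 : coeff1C d (iC d w * iC d u * g) = coeff1C d (iC d w * iC d u' * g) := by
        calc coeff1C d (iC d w * iC d u * g) = coeff1C d (iC d v * iC d w * g) :=
              (htest w).symm
          _ = coeff1C d (iC d v * iC d w * g') := hbil v w
          _ = coeff1C d (iC d w * iC d u' * g') := htest' w
          _ = coeff1C d (iC d w * iC d u' * g) := (hbil w u').symm
      have hiww : iC d w * iC d w * g = iC d w * iC d u * g - iC d w * iC d u' * g := by
        have : iC d w = iC d u - iC d u' := by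
          rw [hw, iC, iC, iC, map_sub]
        rw [this]
        noncomm_ring
      rw [hiww, coeff1C_sub, c1, sub_self]
    have hQw : Qn d w = 0 := by
      have hsq : iC d w * iC d w = algebraMap ℝ (Cl d) (Qn d w) := by
        rw [iC, CliffordAlgebra.ι_sq_scalar]
      rw [hsq, coeff1C_algebraMap_mul] at hkey
      rcases mul_eq_zero.mp hkey with h | h
      · exact h
      · exact absurd h h1ne
    have hsum : ∑ i, w i * w i = 0 := by
      rw [Qn_apply] at hQw
      linarith [hQw]
    have : ∀ i : Fin d, w i = 0 := by
      intro i
      have hle : w i * w i ≤ ∑ k, w k * w k := by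
        refine Finset.single_le_sum (f := fun k => w k * w k) (fun k _ => mul_self_nonneg _)
          (Finset.mem_univ i)
      have := mul_self_nonneg (w i)
      have h0 : w i * w i = 0 := le_antisymm (hsum ▸ hle) this
      exact mul_self_eq_zero.mp h0
    have : w = 0 := funext this
    exact sub_eq_zero.mp (by rw [← hw]; exact this)
  -- the central element
  set δ : Cl d := conjC d γ * γ' with hδ
  have hδcomm : ∀ v : Fin d → ℝ, δ * (CliffordAlgebra.ι (Qn d)) v = (CliffordAlgebra.ι (Qn d)) v * δ := by
    intro v
    obtain ⟨u, hu⟩ := hγact v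
    obtain ⟨u', hu'⟩ := hγact' v
    have huu : u = u' := huniq v u u' hu hu'
    subst huu
    have hγrel' : γ' * iC d v = iC d u * γ' := by
      calc γ' * iC d v = γ' * iC d v * (conjC d γ' * γ') := by rw [hγN2', mul_one]
        _ = (γ' * iC d v * conjC d γ') * γ' := by rw [← mul_assoc]
        _ = iC d u * γ' := by rw [hu']
    have hconjrel : conjC d γ * iC d u = iC d v * conjC d γ := by
      have h3 : conjC d γ * (γ * iC d v * conjC d γ) = conjC d γ * iC d u := by rw [hu]
      have h4 : conjC d γ * (γ * iC d v * conjC d γ) = iC d v * conjC d γ := by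
        rw [show conjC d γ * (γ * iC d v * conjC d γ)
            = (conjC d γ * γ) * iC d v * conjC d γ by noncomm_ring, hγN2, one_mul]
      rw [← h3, h4]
    show δ * iC d v = iC d v * δ
    calc δ * iC d v = conjC d γ * (γ' * iC d v) := by rw [hδ, mul_assoc]
      _ = conjC d γ * (iC d u * γ') := by rw [hγrel']
      _ = (conjC d γ * iC d u) * γ' := by rw [mul_assoc]
      _ = (iC d v * conjC d γ) * γ' := by rw [hconjrel]
      _ = iC d v * δ := by rw [hδ, mul_assoc]
  have hδeven : involute δ = δ := by
    have hγfix : involute γ = γ := involute_of_mem_ClE0 hγE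
    have hγfix' : involute γ' = γ' := involute_of_mem_ClE0 hγE'
    have hconjfix : involute (conjC d γ) = conjC d γ := by
      rw [conjC, hγfix, ← CliffordAlgebra.reverse_involute, hγfix]
    rw [hδ, map_mul, hconjfix, hγfix']
  obtain ⟨c, hc⟩ := central_even_scalar hδcomm hδeven
  -- conclude
  have hγ'γ : γ' = c • γ := by
    have : γ * δ = γ' := by
      rw [hδ, ← mul_assoc, hγN, one_mul]
    rw [← this, hc, ← Algebra.commutes c γ, ← Algebra.smul_def]
  have hφγ : coeff1C d g = r * coeff1C d γ := by rw [hgdef, coeff1C_smul]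
  have hφγ' : coeff1C d g' = (r' * c) * coeff1C d γ := by
    rw [hgdef', hγ'γ, smul_smul, coeff1C_smul]
  have hcγ : coeff1C d γ ≠ 0 := by
    intro h0
    rw [hφγ, h0, mul_zero] at h1ne
    exact h1ne rfl
  have hrc : r = r' * c := by
    have := h1
    rw [hφγ, hφγ'] at this
    exact mul_right_cancel₀ hcγ this
  rw [hgdef, hgdef', hγ'γ, smul_smul, hrc]
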